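/- For all integers s1,…,sl ≥ 1 one has the identity of formal power series in ℚ⟦q⟧: [s1,…,sl] = (1/((s1−1)!⋯(sl−1)!)) · ∑_{n1>⋯>nl>0} ∏_{j=1}^l q^{nj}·P_{sj−1}(q^{nj})/(1−q^{nj})^{sj}, where each factor (1−q^{nj})^{−sj} is expanded as a formal power series (the summand attached to (n1,…,nl) has order ≥ n1, so the infinite sum is a well-defined element of ℚ⟦q⟧). -/

import Mathlib

open Finset
open scoped fwdDiff

open Classical in
/-- The bi-bracket `[s₁,…,s_l; r₁,…,r_l] ∈ ℚ⟦q⟧`, defined coefficient-wise. -/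
noncomputable def biBracket {l : ℕ} (s r : Fin l → ℕ) : PowerSeries ℚ :=
  PowerSeries.mk fun n =>
    ∑ u : Fin l → Fin (n + 1), ∑ v : Fin l → Fin (n + 1),
      if (∀ i j : Fin l, i < j → (u j : ℕ) < (u i : ℕ)) ∧ (∀ j, 0 < (u j : ℕ)) ∧
          (∀ j, 0 < (v j : ℕ)) ∧ (∑ j, (u j : ℕ) * (v j : ℕ)) = n
      then ∏ j, (u j : ℚ) ^ (r j) / (Nat.factorial (r j)) *
            ((v j : ℚ) ^ (s j - 1) / (Nat.factorial (s j - 1)))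
      else 0

/-- The bracket `[s₁,…,s_l] ∈ ℚ⟦q⟧`. -/
noncomputable def bracket {l : ℕ} (s : Fin l → ℕ) : PowerSeries ℚ :=
  biBracket s 0

/-- Eulerian numbers `A_{s,n}`. -/
def eulerianNumber (s n : ℕ) : ℚ :=
  ∑ i ∈ Finset.range (n + 1), (-1 : ℚ) ^ i * ((s + 1).choose i) * ((n + 1 - i : ℕ) : ℚ) ^ s

/-- The `s`-th Eulerian polynomial `P_s`, with `P_0 = 1`. -/
noncomputable def eulerianPoly : ℕ → Polynomial ℚ
  | 0 => 1
  | (s + 1) => ∑ n ∈ Finset.range (s + 1), Polynomial.C (eulerianNumber (s + 1) n) * Polynomial.X ^ n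

lemma fwdDiff_pow_zero : ∀ d N, d < N →
    (Δ_[(1:ℕ)])^[N] (fun x : ℕ => (x:ℚ)^d) = fun _ => 0 := by
  intro d
  induction d using Nat.strong_induction_on with
  | _ d IH =>
    intro N hdN
    obtain ⟨N, rfl⟩ : ∃ N', N = N' + 1 := ⟨N - 1, by omega⟩
    rw [Function.iterate_succ_apply]
    have hΔ : Δ_[(1:ℕ)] (fun x : ℕ => (x:ℚ)^d)
        = ∑ k ∈ range d, ((d.choose k : ℚ) • fun x : ℕ => (x:ℚ)^k) := by
      funext x
      have hb := add_pow (x:ℚ) 1 d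
      simp only [one_pow, mul_one] at hb
      have h1 : Δ_[(1:ℕ)] (fun x : ℕ => (x:ℚ)^d) x = ((x:ℚ)+1)^d - (x:ℚ)^d := by
        simp [fwdDiff]
      rw [h1, hb, sum_range_succ, Finset.sum_apply]
      simp only [Nat.choose_self, Nat.cast_one, mul_one, add_sub_cancel_right, Pi.smul_apply,
        smul_eq_mul]
      exact Finset.sum_congr rfl fun k _ => by ring
    rw [hΔ, fwdDiff_iter_finset_sum]
    funext y
    rw [Finset.sum_apply]
    apply Finset.sum_eq_zero
    intro k hk
    rw [Finset.mem_range] at hk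
    rw [fwdDiff_iter_const_smul, IH k (by omega) N (by omega)]
    simp

lemma alt_sum_pow_zero {d N : ℕ} (hdN : d < N) (y : ℕ) :
    ∑ i ∈ range (N+1), (-1:ℚ)^i * (N.choose i) * ((y + (N - i) : ℕ) : ℚ)^d = 0 := by
  have h := fwdDiff_iter_eq_sum_shift (1:ℕ) (fun x : ℕ => (x:ℚ)^d) N y
  rw [fwdDiff_pow_zero d N hdN] at h
  simp only [smul_eq_mul, mul_one, zsmul_eq_mul] at h
  push_cast at h
  rw [← Finset.sum_range_reflect]
  rw [show (0:ℚ) = ∑ k ∈ range (N + 1), (-1:ℚ) ^ (N - k) * (N.choose k) * ((y:ℚ) + k) ^ d from h]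
  apply Finset.sum_congr rfl
  intro i hi
  rw [Finset.mem_range] at hi
  have e1 : N + 1 - 1 - i = N - i := by omega
  have e2 : N - (N - i) = i := by omega
  have e3 : N.choose (N - i) = N.choose i := Nat.choose_symm (by omega)
  rw [e1, e2, e3]
  push_cast
  ring

lemma eulerianNumber_eq_zero {t n : ℕ} (htn : t ≤ n) (h' : 1 ≤ t ∨ t < n) :
    eulerianNumber t n = 0 := by
  have key := alt_sum_pow_zero (show t < t+1 by omega) (n - t)
  have e1 : ∀ i ∈ range (t+2), (-1:ℚ)^i * ((t+1).choose i) * (((n-t) + (t+1 - i) : ℕ):ℚ)^t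
      = (-1:ℚ)^i * ((t+1).choose i) * ((n+1-i : ℕ):ℚ)^t := by
    intro i hi
    rw [Finset.mem_range] at hi
    have : (n-t) + (t+1-i) = n+1-i := by omega
    rw [this]
  rw [show t + 1 + 1 = t + 2 by omega, Finset.sum_congr rfl e1] at key
  unfold eulerianNumber
  rcases eq_or_lt_of_le htn with rfl | hlt
  · -- n = t : sum over range (t+1); key is over range (t+2), extra term is i = t+1 which vanishes
    rw [← key]
    apply Finset.sum_subset
    · intro x hx; rw [Finset.mem_range] at *; omega
    · intro x _ hx2
      have hx : x = t + 1 := by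
        rw [Finset.mem_range] at *
        omega
      subst hx
      have ht1 : 1 ≤ t := by omega
      simp [zero_pow (show t ≠ 0 by omega)]
  · -- t < n : range (t+2) ⊆ range (n+1), extra terms have vanishing binomials
    rw [← key]
    symm
    apply Finset.sum_subset
    · intro x hx; rw [Finset.mem_range] at *; omega
    · intro x _ hx2
      rw [Finset.mem_range] at hx2
      have : t + 1 < x := by omega
      simp [Nat.choose_eq_zero_of_lt this]

lemma eulerianPoly_coeff (t k : ℕ) (ht : 1 ≤ t) :
    (eulerianPoly t).coeff k = if k < t then eulerianNumber t k else 0 := by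
  obtain ⟨t', rfl⟩ : ∃ t', t = t'+1 := ⟨t-1, by omega⟩
  show (∑ n ∈ Finset.range (t' + 1),
      Polynomial.C (eulerianNumber (t' + 1) n) * Polynomial.X ^ n).coeff k = _
  rw [Polynomial.finset_sum_coeff]
  simp only [Polynomial.coeff_C_mul, Polynomial.coeff_X_pow, mul_ite, mul_one, mul_zero]
  rw [Finset.sum_ite_eq (range (t'+1)) k (fun n => eulerianNumber (t'+1) n)]
  simp [Finset.mem_range]

lemma key_sum (s d : ℕ) (hs : 1 ≤ s) :
    (∑ i ∈ range (s+1), if i < d then (-1:ℚ)^i * (s.choose i) * ((d - i : ℕ):ℚ)^(s-1) else 0)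
      = if 1 ≤ d then (eulerianPoly (s-1)).coeff (d-1) else 0 := by
  rcases Nat.eq_zero_or_pos d with rfl | hd
  · simp
  rw [if_pos (show 1 ≤ d from hd)]
  have hL : (∑ i ∈ range (s+1), if i < d then (-1:ℚ)^i * (s.choose i) * ((d - i : ℕ):ℚ)^(s-1) else 0)
      = eulerianNumber (s-1) (d-1) := by
    have hA : (∑ i ∈ range (s+1), if i < d then (-1:ℚ)^i * (s.choose i) * ((d - i : ℕ):ℚ)^(s-1) else 0)
        = ∑ i ∈ range (s+1+d), if i < d then (-1:ℚ)^i * (s.choose i) * ((d - i : ℕ):ℚ)^(s-1) else 0 := by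
      apply Finset.sum_subset
      · intro x hx; rw [Finset.mem_range] at *; omega
      · intro x _ hx2
        rw [Finset.mem_range] at hx2
        split_ifs with h
        · simp [Nat.choose_eq_zero_of_lt (show s < x by omega)]
        · rfl
    rw [hA, ← Finset.sum_filter]
    have hset : (range (s+1+d)).filter (fun i => i < d) = range d := by
      ext x; simp only [Finset.mem_filter, Finset.mem_range]; omega
    rw [hset]
    unfold eulerianNumber
    rw [show d - 1 + 1 = d by omega, Nat.sub_add_cancel hs]
  rw [hL]
  rcases Nat.lt_or_ge s 2 with hs1 | hs2
  · -- s = 1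
    have : s = 1 := by omega
    subst this
    simp only [Nat.sub_self]
    show eulerianNumber 0 (d-1) = (eulerianPoly 0).coeff (d-1)
    show eulerianNumber 0 (d-1) = (1 : Polynomial ℚ).coeff (d-1)
    rw [Polynomial.coeff_one]
    rcases Nat.eq_or_lt_of_le hd with h1 | h2
    · have : d = 1 := by omega
      subst this
      simp [eulerianNumber]
    · rw [if_neg (by omega)]
      exact eulerianNumber_eq_zero (by omega) (Or.inr (by omega))
  · -- s ≥ 2
    rw [eulerianPoly_coeff (s-1) (d-1) (by omega)]
    split_ifs with h
    · rfl
    · exact eulerianNumber_eq_zero (by omega) (Or.inl (by omega))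

open PowerSeries in
noncomputable def Eser (s u : ℕ) : PowerSeries ℚ :=
  PowerSeries.mk fun k => if u ∣ k ∧ 0 < k then ((k / u : ℕ) : ℚ) ^ (s - 1) else 0

open Polynomial in
lemma coeff_aeval_X_pow (p : Polynomial ℚ) (u : ℕ) (hu : 0 < u) (m : ℕ) :
    PowerSeries.coeff (R := ℚ) m (Polynomial.aeval ((PowerSeries.X : PowerSeries ℚ)^u) p)
      = if u ∣ m then p.coeff (m / u) else 0 := by
  classical
  induction p using Polynomial.induction_on' with
  | add p q hp hq =>
    rw [map_add, map_add, hp, hq, Polynomial.coeff_add]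
    split_ifs <;> simp
  | monomial n a =>
    rw [Polynomial.aeval_monomial, ← pow_mul]
    have halg : (algebraMap ℚ (PowerSeries ℚ)) a = PowerSeries.C (R := ℚ) a := rfl
    rw [halg, PowerSeries.coeff_C_mul, PowerSeries.coeff_X_pow]
    rw [Polynomial.coeff_monomial]
    by_cases h : m = u * n
    · subst h
      rw [if_pos rfl, if_pos ⟨n, rfl⟩, Nat.mul_div_cancel_left n hu, if_pos rfl, mul_one]
    · rw [if_neg h, mul_zero]
      by_cases h2 : u ∣ m
      · rw [if_pos h2, if_neg]
        intro hn
        apply h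
        rw [hn, Nat.mul_div_cancel' h2]
      · rw [if_neg h2]

lemma one_sub_X_pow_expand (u s : ℕ) :
    ((1 : PowerSeries ℚ) - PowerSeries.X^u)^s
      = ∑ i ∈ range (s+1), ((-1:ℚ)^i * (s.choose i : ℚ)) • (PowerSeries.X : PowerSeries ℚ)^(u*i) := by
  rw [sub_pow, ← Finset.sum_range_reflect]
  apply Finset.sum_congr rfl
  intro i hi
  rw [Finset.mem_range] at hi
  have e0 : s + 1 - 1 - i = s - i := by omega
  rw [e0]
  have e1 : s - (s - i) = i := by omega
  have e2 : s.choose (s - i) = s.choose i := Nat.choose_symm (by omega)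
  have e3 : (-1 : PowerSeries ℚ)^((s-i)+s) = (-1)^i := by
    rw [show (s-i)+s = i + 2*(s-i) by omega, pow_add, pow_mul]
    simp
  rw [e1, e2, e3, one_pow, ← pow_mul]
  rw [PowerSeries.smul_eq_C_mul, map_mul, map_pow, map_neg, map_one, map_natCast]
  ring

lemma one_sub_mul_Eser (s u : ℕ) (hs : 1 ≤ s) (hu : 1 ≤ u) :
    ((1 : PowerSeries ℚ) - PowerSeries.X^u)^s * Eser s u
      = PowerSeries.X^u * Polynomial.aeval ((PowerSeries.X : PowerSeries ℚ)^u) (eulerianPoly (s-1)) := by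
  classical
  ext m
  rw [one_sub_X_pow_expand, Finset.sum_mul, map_sum]
  simp only [smul_mul_assoc, LinearMap.map_smul, smul_eq_mul]
  rw [PowerSeries.coeff_X_pow_mul', coeff_aeval_X_pow _ u (by omega)]
  simp only [PowerSeries.coeff_X_pow_mul', Eser, PowerSeries.coeff_mk]
  by_cases hdvd : u ∣ m
  · obtain ⟨d, rfl⟩ := hdvd
    have hstep : ∀ i ∈ range (s+1),
        (-1:ℚ)^i * (s.choose i : ℚ) *
          (if u * i ≤ u * d then
            (if u ∣ u * d - u * i ∧ 0 < u * d - u * i then (((u * d - u * i) / u : ℕ):ℚ) ^ (s-1) else 0)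
          else 0)
        = if i < d then (-1:ℚ)^i * (s.choose i) * ((d - i : ℕ):ℚ)^(s-1) else 0 := by
      intro i _
      have hsub : u * d - u * i = u * (d - i) := by
        rw [Nat.mul_sub]
      by_cases hid : i < d
      · rw [if_pos (Nat.mul_le_mul_left u (le_of_lt hid)), hsub,
          if_pos ⟨⟨d - i, rfl⟩, Nat.mul_pos (by omega) (by omega)⟩,
          Nat.mul_div_cancel_left _ (show 0 < u by omega), if_pos hid]
      · rw [if_neg hid]
        by_cases hle : u * i ≤ u * d
        · have hi2 : d ≤ i := by omega
          have : u * d - u * i = 0 := by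
            rw [hsub]
            simp [Nat.sub_eq_zero_of_le hi2]
          rw [if_pos hle, this, if_neg (by simp)]
          ring
        · rw [if_neg hle]
          ring
    rw [Finset.sum_congr rfl hstep, key_sum s d hs]
    by_cases hd : 1 ≤ d
    · rw [if_pos (show 1 ≤ d from hd), if_pos (Nat.le_mul_of_pos_right u hd)]
      have h1 : u * d - u = u * (d - 1) := by rw [Nat.mul_sub, mul_one]
      rw [h1, if_pos ⟨d - 1, rfl⟩, Nat.mul_div_cancel_left _ (show 0 < u by omega)]
    · have : d = 0 := by omega
      subst this
      rw [if_neg hd, if_neg (by omega)]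
  · have hz : ∀ i ∈ range (s+1),
        (-1:ℚ)^i * (s.choose i : ℚ) *
          (if u * i ≤ m then
            (if u ∣ m - u * i ∧ 0 < m - u * i then (((m - u * i) / u : ℕ):ℚ) ^ (s-1) else 0)
          else 0) = 0 := by
      intro i _
      by_cases hle : u * i ≤ m
      · rw [if_pos hle, if_neg, mul_zero]
        rintro ⟨hdv, -⟩
        exact hdvd (by
          have : m = (m - u * i) + u * i := by omega
          rw [this]
          exact Nat.dvd_add hdv ⟨i, rfl⟩)
      · rw [if_neg hle, mul_zero]
    rw [Finset.sum_eq_zero hz]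
    by_cases hum : u ≤ m
    · rw [if_pos hum, if_neg]
      rintro hdv
      exact hdvd (by
        have : m = (m - u) + u := by omega
        rw [this]
        exact Nat.dvd_add hdv ⟨1, by ring⟩)
    · rw [if_neg hum]

lemma factor_eq (s u : ℕ) (hs : 1 ≤ s) (hu : 1 ≤ u) :
    (PowerSeries.X : PowerSeries ℚ)^u *
      Polynomial.aeval ((PowerSeries.X : PowerSeries ℚ)^u) (eulerianPoly (s-1)) *
      ((1 - PowerSeries.X^u)⁻¹)^s = Eser s u := by
  have hc : PowerSeries.constantCoeff (R := ℚ) ((1 : PowerSeries ℚ) - PowerSeries.X^u) ≠ 0 := by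
    rw [map_sub, map_pow, map_one, PowerSeries.constantCoeff_X, zero_pow (by omega), sub_zero]
    exact one_ne_zero
  have hunit : ((1 : PowerSeries ℚ) - PowerSeries.X^u)⁻¹ * (1 - PowerSeries.X^u) = 1 :=
    PowerSeries.inv_mul_cancel _ hc
  calc (PowerSeries.X : PowerSeries ℚ)^u *
      Polynomial.aeval ((PowerSeries.X : PowerSeries ℚ)^u) (eulerianPoly (s-1)) *
      ((1 - PowerSeries.X^u)⁻¹)^s
      = ((1 - PowerSeries.X^u)^s * Eser s u) * ((1 - PowerSeries.X^u)⁻¹)^s := by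
        rw [one_sub_mul_Eser s u hs hu]
    _ = (((1 : PowerSeries ℚ) - PowerSeries.X^u)⁻¹ * (1 - PowerSeries.X^u))^s * Eser s u := by
        rw [mul_pow]; ring
    _ = Eser s u := by rw [hunit, one_pow, one_mul]

lemma inner_bij {l : ℕ} (u : Fin l → ℕ) (hu : ∀ j, 0 < u j) (e : Fin l → ℕ) (m : ℕ) :
    (∑ v : Fin l → Fin (m+1), if (∀ j, 0 < (v j : ℕ)) ∧ (∑ j, u j * (v j : ℕ)) = m
        then ∏ j, ((v j : ℕ) : ℚ) ^ (e j) else 0)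
    = ∑ k ∈ Finset.finsuppAntidiag (univ : Finset (Fin l)) m,
        ∏ j, (if u j ∣ k j ∧ 0 < k j then ((k j / u j : ℕ) : ℚ) ^ (e j) else 0) := by
  classical
  have hR : ∀ k : Fin l →₀ ℕ,
      (∏ j, if u j ∣ k j ∧ 0 < k j then ((k j / u j : ℕ) : ℚ) ^ (e j) else 0)
      = if (∀ j, u j ∣ k j ∧ 0 < k j) then ∏ j, ((k j / u j : ℕ) : ℚ) ^ (e j) else 0 :=
    fun k => by
      by_cases h : ∀ j, u j ∣ k j ∧ 0 < k j
      · rw [if_pos h]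
        exact Finset.prod_congr rfl fun j _ => if_pos (h j)
      · rw [if_neg h]
        push_neg at h
        obtain ⟨j, hj⟩ := h
        refine Finset.prod_eq_zero (Finset.mem_univ j) ?_
        rw [if_neg]
        intro hcon
        have := hj hcon.1
        omega
  rw [Finset.sum_congr rfl fun k _ => hR k]
  rw [← Finset.sum_filter, ← Finset.sum_filter]
  refine Finset.sum_bij' (i := fun v _ => Finsupp.equivFunOnFinite.symm (fun j => u j * (v j : ℕ)))
    (j := fun k hk => fun j => (⟨k j / u j, ?_⟩ : Fin (m+1))) ?_ ?_ ?_ ?_ ?_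
  · -- bound : k j / u j < m + 1
    rw [Finset.mem_filter, Finset.mem_finsuppAntidiag] at hk
    have hkj : k j ≤ m := by
      rw [← hk.1.1]
      exact Finset.single_le_sum (fun i _ => Nat.zero_le _) (Finset.mem_univ j)
    have := Nat.div_le_self (k j) (u j)
    omega
  · -- hi : image in filter of finsuppAntidiag
    intro v hv
    rw [Finset.mem_filter] at hv
    rw [Finset.mem_filter, Finset.mem_finsuppAntidiag]
    refine ⟨⟨?_, ?_⟩, ?_⟩
    · simpa using hv.2.2
    · intro j _
      exact Finset.mem_univ j
    · intro j
      simp only [Finsupp.coe_equivFunOnFinite_symm]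
      exact ⟨Dvd.intro _ rfl, Nat.mul_pos (hu j) (hv.2.1 j)⟩
  · -- hj : image back in filter
    intro k hk
    rw [Finset.mem_filter, Finset.mem_finsuppAntidiag] at hk
    rw [Finset.mem_filter]
    refine ⟨Finset.mem_univ _, ?_, ?_⟩
    · intro j
      have h1 := (hk.2 j).1
      have h2 := (hk.2 j).2
      have := Nat.le_of_dvd h2 h1
      exact Nat.div_pos this (hu j)
    · have : ∀ j, u j * (k j / u j) = k j := fun j => Nat.mul_div_cancel' (hk.2 j).1
      calc ∑ j, u j * (k j / u j) = ∑ j, k j := Finset.sum_congr rfl fun j _ => this j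
        _ = m := hk.1.1
  · -- left_inv
    intro v hv
    funext j
    apply Fin.ext
    simp only [Finsupp.coe_equivFunOnFinite_symm]
    exact Nat.mul_div_cancel_left _ (hu j)
  · -- right_inv
    intro k hk
    rw [Finset.mem_filter, Finset.mem_finsuppAntidiag] at hk
    ext j
    simp only [Finsupp.coe_equivFunOnFinite_symm]
    exact Nat.mul_div_cancel' (hk.2 j).1
  · -- values
    intro v hv
    apply Finset.prod_congr rfl
    intro j _
    simp only [Finsupp.coe_equivFunOnFinite_symm]
    rw [Nat.mul_div_cancel_left _ (hu j)]

open Classical in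
/-- For `s₁,…,s_l ≥ 1` one has
`[s₁,…,s_l] = (1/((s₁−1)!⋯(s_l−1)!)) · ∑_{n₁>⋯>n_l>0} ∏_j q^{n_j} P_{s_j−1}(q^{n_j})/(1−q^{n_j})^{s_j}`,
stated coefficient-wise: the coefficient of `q^m` of the infinite sum equals the coefficient of
`q^m` of the (finite) sum over all tuples with `n_j ≤ m`, since the summand attached to
`(n₁,…,n_l)` has order `≥ n₁`. -/
theorem bracket_eq_eulerian_sum {l : ℕ} (s : Fin l → ℕ) (hs : ∀ j, 1 ≤ s j) (m : ℕ) :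
    (∏ j, ((s j - 1).factorial : ℚ)) * PowerSeries.coeff (R := ℚ) m (bracket s) =
      PowerSeries.coeff (R := ℚ) m (∑ n : Fin l → Fin (m + 1),
        if (∀ i j : Fin l, i < j → (n j : ℕ) < (n i : ℕ)) ∧ (∀ j, 0 < (n j : ℕ)) then
          ∏ j, (PowerSeries.X ^ (n j : ℕ) *
            Polynomial.aeval ((PowerSeries.X : PowerSeries ℚ) ^ (n j : ℕ)) (eulerianPoly (s j - 1)) *
            ((1 - PowerSeries.X ^ (n j : ℕ))⁻¹) ^ (s j))
        else 0) := by
    classical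
  rw [map_sum]
  have hRterm : ∀ n : Fin l → Fin (m+1),
      (PowerSeries.coeff (R := ℚ) m) (if (∀ i j : Fin l, i < j → (n j : ℕ) < (n i : ℕ)) ∧ (∀ j, 0 < (n j : ℕ)) then
          ∏ j, (PowerSeries.X ^ (n j : ℕ) *
            Polynomial.aeval ((PowerSeries.X : PowerSeries ℚ) ^ (n j : ℕ)) (eulerianPoly (s j - 1)) *
            ((1 - PowerSeries.X ^ (n j : ℕ))⁻¹) ^ (s j))
        else 0)
      = if (∀ i j : Fin l, i < j → (n j : ℕ) < (n i : ℕ)) ∧ (∀ j, 0 < (n j : ℕ)) then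
          ∑ k ∈ Finset.finsuppAntidiag (univ : Finset (Fin l)) m,
            ∏ j, (if (n j : ℕ) ∣ k j ∧ 0 < k j then ((k j / (n j : ℕ) : ℕ) : ℚ) ^ (s j - 1) else 0)
        else 0 := by
    intro n
    by_cases hc : (∀ i j : Fin l, i < j → (n j : ℕ) < (n i : ℕ)) ∧ (∀ j, 0 < (n j : ℕ))
    · rw [if_pos hc, if_pos hc]
      have hprod : (∏ j, (PowerSeries.X ^ (n j : ℕ) *
            Polynomial.aeval ((PowerSeries.X : PowerSeries ℚ) ^ (n j : ℕ)) (eulerianPoly (s j - 1)) *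
            ((1 - PowerSeries.X ^ (n j : ℕ))⁻¹) ^ (s j)))
          = ∏ j, Eser (s j) (n j : ℕ) :=
        Finset.prod_congr rfl fun j _ => factor_eq (s j) (n j : ℕ) (hs j) (hc.2 j)
      rw [hprod, PowerSeries.coeff_prod]
      apply Finset.sum_congr rfl
      intro k _
      apply Finset.prod_congr rfl
      intro j _
      rw [Eser, PowerSeries.coeff_mk]
    · rw [if_neg hc, if_neg hc, map_zero]
  rw [Finset.sum_congr rfl fun n _ => hRterm n]
  rw [bracket, biBracket, PowerSeries.coeff_mk, Finset.mul_sum]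
  apply Finset.sum_congr rfl
  intro u _
  rw [Finset.mul_sum]
  by_cases hc : (∀ i j : Fin l, i < j → (u j : ℕ) < (u i : ℕ)) ∧ (∀ j, 0 < (u j : ℕ))
  · rw [if_pos hc]
    have hstep : ∀ v : Fin l → Fin (m+1),
        (∏ j, ((s j - 1).factorial : ℚ)) *
          (if (∀ i j : Fin l, i < j → (u j : ℕ) < (u i : ℕ)) ∧ (∀ j, 0 < (u j : ℕ)) ∧
              (∀ j, 0 < (v j : ℕ)) ∧ (∑ j, (u j : ℕ) * (v j : ℕ)) = m
          then ∏ j, (u j : ℚ) ^ ((0 : Fin l → ℕ) j) / (Nat.factorial ((0 : Fin l → ℕ) j)) *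
                ((v j : ℚ) ^ (s j - 1) / (Nat.factorial (s j - 1)))
          else 0)
        = if (∀ j, 0 < (v j : ℕ)) ∧ (∑ j, (u j : ℕ) * (v j : ℕ)) = m
          then ∏ j, ((v j : ℕ) : ℚ) ^ (s j - 1) else 0 := by
      intro v
      by_cases hc4 : (∀ j, 0 < (v j : ℕ)) ∧ (∑ j, (u j : ℕ) * (v j : ℕ)) = m
      · rw [if_pos ⟨hc.1, hc.2, hc4.1, hc4.2⟩, if_pos hc4]
        simp only [Pi.zero_apply, pow_zero, Nat.factorial_zero, Nat.cast_one, one_mul]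
        rw [show ((1:ℚ)/1) = 1 from by norm_num]
        simp only [one_mul]
        rw [← Finset.prod_mul_distrib]
        apply Finset.prod_congr rfl
        intro j _
        have hne : (((s j - 1).factorial : ℕ) : ℚ) ≠ 0 :=
          Nat.cast_ne_zero.mpr (Nat.factorial_ne_zero _)
        field_simp
      · rw [if_neg (show ¬_ from fun h => hc4 ⟨h.2.2.1, h.2.2.2⟩), mul_zero, if_neg hc4]
    rw [Finset.sum_congr rfl fun v _ => hstep v]
    exact inner_bij (fun j => (u j : ℕ)) hc.2 (fun j => s j - 1) m
  · rw [if_neg hc, Finset.sum_eq_zero]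
    intro v _
    rw [if_neg, mul_zero]
    rintro ⟨h1, h2, -, -⟩
    exact hc ⟨h1, h2⟩
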